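/- Let p ∈ [1,∞), d ≥ 1, ε > 0 and h > 0, and consider the cubic partition 𝒜*_h of ℝ^d. For any cell A of 𝒜*_h, the number N of cells B of 𝒜*_h (including A itself) with inf{‖x − y‖_p : x ∈ A, y ∈ B} < ε satisfies λ(B_ε)/h^d ≤ N ≤ λ(B_{ε + 2h·d^{1/p}})/h^d, where B_r denotes the closed ℓ_p-ball of radius r centered at the origin in ℝ^d and λ is Lebesgue measure. -/

import Mathlib

open MeasureTheory
open scoped ENNReal

/-- The `ℓ_p` norm of a vector of `ℝ^d` for finite `p ∈ [1,∞)`. -/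
noncomputable def lpNormR {d : ℕ} (p : ℝ) (x : Fin d → ℝ) : ℝ :=
  (∑ i, |x i| ^ p) ^ (1 / p)

/-- The cell of the cubic partition `𝒜*_h` of `ℝ^d` indexed by `i ∈ ℤ^d`,
namely `∏_j [i_j h, (i_j + 1) h)`. -/
def cubicCell {d : ℕ} (h : ℝ) (i : Fin d → ℤ) : Set (Fin d → ℝ) :=
  {x | ∀ j, x j ∈ Set.Ico ((i j : ℝ) * h) (((i j : ℝ) + 1) * h)}

namespace CubicAux

variable {d : ℕ} {p : ℝ}

lemma sum_nonneg' (x : Fin d → ℝ) : 0 ≤ ∑ i, |x i| ^ p :=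
  Finset.sum_nonneg fun i _ => Real.rpow_nonneg (abs_nonneg _) _

lemma lp_nonneg (x : Fin d → ℝ) : 0 ≤ lpNormR p x :=
  Real.rpow_nonneg (sum_nonneg' x) _

lemma lp_coord (hp : 0 < p) (x : Fin d → ℝ) (j : Fin d) : |x j| ≤ lpNormR p x := by
  have h1 : |x j| ^ p ≤ ∑ i, |x i| ^ p :=
    Finset.single_le_sum (fun i _ => Real.rpow_nonneg (abs_nonneg _) _) (Finset.mem_univ j)
  have h2 : (|x j| ^ p) ^ (1 / p) ≤ lpNormR p x :=
    Real.rpow_le_rpow (Real.rpow_nonneg (abs_nonneg _) _) h1 (by positivity)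
  calc |x j| = (|x j| ^ p) ^ (1 / p) := by
        rw [← Real.rpow_mul (abs_nonneg _), mul_one_div_cancel hp.ne', Real.rpow_one]
    _ ≤ lpNormR p x := h2

lemma lp_neg (x : Fin d → ℝ) : lpNormR p (-x) = lpNormR p x := by
  simp [lpNormR]

lemma lp_sub_comm (x y : Fin d → ℝ) : lpNormR p (x - y) = lpNormR p (y - x) := by
  rw [← neg_sub y x, lp_neg]

lemma lp_smul (hp : 0 < p) (t : ℝ) (x : Fin d → ℝ) :
    lpNormR p (t • x) = |t| * lpNormR p x := by
  unfold lpNormR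
  have key : ∀ i : Fin d, |(t • x) i| ^ p = |t| ^ p * |x i| ^ p := fun i => by
    rw [Pi.smul_apply, smul_eq_mul, abs_mul, Real.mul_rpow (abs_nonneg _) (abs_nonneg _)]
  rw [Finset.sum_congr rfl fun i _ => key i, ← Finset.mul_sum,
    Real.mul_rpow (Real.rpow_nonneg (abs_nonneg _) _) (sum_nonneg' x),
    ← Real.rpow_mul (abs_nonneg t), mul_one_div_cancel hp.ne', Real.rpow_one]

lemma lp_triangle (hp : 1 ≤ p) (x y : Fin d → ℝ) :
    lpNormR p (x + y) ≤ lpNormR p x + lpNormR p y := by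
  have := Real.Lp_add_le (Finset.univ : Finset (Fin d)) x y hp
  simpa [lpNormR] using this

lemma lp_diam (hp : 1 ≤ p) {h : ℝ} (hh : 0 < h) {i : Fin d → ℤ} {x y : Fin d → ℝ}
    (hx : x ∈ cubicCell h i) (hy : y ∈ cubicCell h i) :
    lpNormR p (x - y) ≤ h * (d : ℝ) ^ (1 / p) := by
  have hp0 : 0 < p := lt_of_lt_of_le one_pos hp
  have hcoord : ∀ j, |(x - y) j| ≤ h := fun j => by
    obtain ⟨hx1, hx2⟩ := hx j; obtain ⟨hy1, hy2⟩ := hy j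
    rw [Pi.sub_apply, abs_sub_le_iff]
    constructor <;> nlinarith
  have hsum : ∑ j, |(x - y) j| ^ p ≤ (d : ℝ) * h ^ p := by
    calc ∑ j, |(x - y) j| ^ p ≤ ∑ _j : Fin d, h ^ p :=
          Finset.sum_le_sum fun j _ => Real.rpow_le_rpow (abs_nonneg _) (hcoord j) hp0.le
      _ = (d : ℝ) * h ^ p := by
          rw [Finset.sum_const, Finset.card_univ, Fintype.card_fin, nsmul_eq_mul]
  calc lpNormR p (x - y) ≤ ((d : ℝ) * h ^ p) ^ (1 / p) :=
        Real.rpow_le_rpow (sum_nonneg' _) hsum (by positivity)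
    _ = (d : ℝ) ^ (1 / p) * (h ^ p) ^ (1 / p) :=
        Real.mul_rpow (Nat.cast_nonneg d) (Real.rpow_nonneg hh.le _)
    _ = h * (d : ℝ) ^ (1 / p) := by
        rw [← Real.rpow_mul hh.le, mul_one_div_cancel hp0.ne', Real.rpow_one, mul_comm]

lemma cell_eq_pi (h : ℝ) (i : Fin d → ℤ) :
    cubicCell h i =
      Set.pi Set.univ (fun j => Set.Ico ((i j : ℝ) * h) (((i j : ℝ) + 1) * h)) := by
  ext x; simp [cubicCell, Set.mem_pi]

lemma cell_measurable (h : ℝ) (i : Fin d → ℤ) : MeasurableSet (cubicCell h i) := by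
  rw [cell_eq_pi]; exact MeasurableSet.univ_pi fun j => measurableSet_Ico

lemma cell_volume {h : ℝ} (hh : 0 < h) (i : Fin d → ℤ) :
    volume (cubicCell h i) = ENNReal.ofReal h ^ d := by
  rw [cell_eq_pi, volume_pi_pi]
  have e : ∀ j : Fin d, volume (Set.Ico ((i j : ℝ) * h) (((i j : ℝ) + 1) * h))
      = ENNReal.ofReal h := fun j => by
    rw [Real.volume_Ico]; congr 1; ring
  rw [Finset.prod_congr rfl fun j _ => e j, Finset.prod_const, Finset.card_univ,
    Fintype.card_fin]

lemma cell_unique {h : ℝ} (hh : 0 < h) {i i' : Fin d → ℤ} {x : Fin d → ℝ}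
    (hx : x ∈ cubicCell h i) (hx' : x ∈ cubicCell h i') : i = i' := by
  funext j
  obtain ⟨h1, h2⟩ := hx j
  obtain ⟨h3, h4⟩ := hx' j
  have k1 : (i j : ℝ) < (i' j : ℝ) + 1 := by
    have := lt_of_le_of_lt h1 h4
    exact (mul_lt_mul_iff_of_pos_right hh).1 this
  have k2 : (i' j : ℝ) < (i j : ℝ) + 1 := by
    have := lt_of_le_of_lt h3 h2
    exact (mul_lt_mul_iff_of_pos_right hh).1 this
  have k1' : (i j : ℤ) < i' j + 1 := by exact_mod_cast k1
  have k2' : (i' j : ℤ) < i j + 1 := by exact_mod_cast k2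
  omega

lemma mem_cell_floor {h : ℝ} (hh : 0 < h) (z : Fin d → ℝ) :
    z ∈ cubicCell h (fun j => ⌊z j / h⌋) := by
  intro j
  constructor
  · have := Int.floor_le (z j / h)
    calc ((⌊z j / h⌋ : ℝ)) * h ≤ (z j / h) * h := mul_le_mul_of_nonneg_right this hh.le
      _ = z j := div_mul_cancel₀ _ hh.ne'
  · have := Int.lt_floor_add_one (z j / h)
    calc z j = (z j / h) * h := (div_mul_cancel₀ _ hh.ne').symm
      _ < ((⌊z j / h⌋ : ℝ) + 1) * h := by
          exact mul_lt_mul_of_pos_right this hh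

lemma ball_vol_ne_top (hp : 0 < p) (r : ℝ) :
    volume {x : Fin d → ℝ | lpNormR p x ≤ r} ≠ ⊤ := by
  have hsub : {x : Fin d → ℝ | lpNormR p x ≤ r}
      ⊆ Set.pi Set.univ fun _ : Fin d => Set.Icc (-r) r := fun x hx j _ =>
    abs_le.1 ((lp_coord hp x j).trans hx)
  have := measure_mono (μ := volume) hsub
  refine ne_top_of_le_ne_top ?_ this
  rw [volume_pi_pi]
  simp only [Real.volume_Icc]
  rw [Finset.prod_const, Finset.card_univ, Fintype.card_fin]
  exact (ENNReal.pow_lt_top ENNReal.ofReal_lt_top).ne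

end CubicAux

open CubicAux in
/-- for `p ∈ [1,∞)`, `d ≥ 1`, `ε, h > 0` and any cell `A = cubicCell h i₀`
of the cubic partition, the number `N` of cells `B` (including `A`) with
`inf{‖x−y‖_p : x ∈ A, y ∈ B} < ε` (equivalently: some pair at distance `< ε`) satisfies
`λ(B_ε)/h^d ≤ N ≤ λ(B_{ε+2h·d^{1/p}})/h^d`, where `B_r` is the closed `ℓ_p`-ball of
radius `r` and `λ` is Lebesgue measure. -/
theorem cubic_partition_neighbour_count
    {d : ℕ} (hd : 1 ≤ d) (p : ℝ) (hp : 1 ≤ p) (ε h : ℝ) (hε : 0 < ε) (hh : 0 < h)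
    (i₀ : Fin d → ℤ) :
    (({i : Fin d → ℤ | ∃ x ∈ cubicCell h i₀, ∃ y ∈ cubicCell h i,
        lpNormR p (x - y) < ε}).Finite) ∧
    (volume {x : Fin d → ℝ | lpNormR p x ≤ ε}).toReal / h ^ d
        ≤ ({i : Fin d → ℤ | ∃ x ∈ cubicCell h i₀, ∃ y ∈ cubicCell h i,
            lpNormR p (x - y) < ε}).ncard ∧
    (({i : Fin d → ℤ | ∃ x ∈ cubicCell h i₀, ∃ y ∈ cubicCell h i,
        lpNormR p (x - y) < ε}).ncard : ℝ)
      ≤ (volume {x : Fin d → ℝ | lpNormR p x ≤ ε + 2 * h * (d : ℝ) ^ (1 / p)}).toReal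
          / h ^ d := by
  have hp0 : 0 < p := lt_of_lt_of_le one_pos hp
  set S : Set (Fin d → ℤ) := {i : Fin d → ℤ | ∃ x ∈ cubicCell h i₀, ∃ y ∈ cubicCell h i,
      lpNormR p (x - y) < ε} with hS
  set x₀ : Fin d → ℝ := fun j => (i₀ j : ℝ) * h with hx₀def
  set R : ℝ := ε + 2 * h * (d : ℝ) ^ (1 / p) with hR
  have hD : 0 ≤ (d : ℝ) ^ (1 / p) := Real.rpow_nonneg (Nat.cast_nonneg d) _
  have hx₀ : x₀ ∈ cubicCell h i₀ := fun j =>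
    ⟨le_refl _, by
      show (i₀ j : ℝ) * h < ((i₀ j : ℝ) + 1) * h
      nlinarith⟩
  -- Step A
  have hA : ∀ i ∈ S, ∀ z ∈ cubicCell h i, lpNormR p (z - x₀) ≤ R := by
    rintro i ⟨x, hx, y, hy, hxy⟩ z hz
    have e : z - x₀ = (z - y) + ((y - x) + (x - x₀)) := by abel
    rw [e]
    have t1 : lpNormR p (z - y) ≤ h * (d : ℝ) ^ (1 / p) := lp_diam hp hh hz hy
    have t2 : lpNormR p (y - x) < ε := by rw [lp_sub_comm]; exact hxy
    have t3 : lpNormR p (x - x₀) ≤ h * (d : ℝ) ^ (1 / p) := lp_diam hp hh hx hx₀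
    have := lp_triangle hp (z - y) ((y - x) + (x - x₀))
    have := lp_triangle hp (y - x) (x - x₀)
    rw [hR]; linarith
  -- translation invariance
  have htrans : ∀ r : ℝ, volume {z : Fin d → ℝ | lpNormR p (z - x₀) ≤ r}
      = volume {x : Fin d → ℝ | lpNormR p x ≤ r} := by
    intro r
    have e : {z : Fin d → ℝ | lpNormR p (z - x₀) ≤ r}
        = (fun z => -x₀ + z) ⁻¹' {x : Fin d → ℝ | lpNormR p x ≤ r} := by
      ext z
      simp only [Set.mem_setOf_eq, Set.mem_preimage]
      rw [neg_add_eq_sub]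
    rw [e, measure_preimage_add]
  -- finiteness
  have hfin : S.Finite := by
    set M : ℤ := ⌈R / h⌉ with hM
    refine Set.Finite.subset (Set.Finite.pi fun j => Set.finite_Icc (i₀ j - M) (i₀ j + M)) ?_
    intro i hi
    have hc : (fun j => (i j : ℝ) * h) ∈ cubicCell h i := fun j =>
      ⟨le_refl _, by
        show (i j : ℝ) * h < ((i j : ℝ) + 1) * h
        nlinarith⟩
    have key := hA i hi _ hc
    intro j _
    have hcoord : |(i j : ℝ) * h - (i₀ j : ℝ) * h| ≤ R :=
      (lp_coord hp0 _ j).trans key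
    have e1 : (i j : ℝ) * h - (i₀ j : ℝ) * h = ((i j : ℝ) - (i₀ j : ℝ)) * h := by ring
    rw [e1, abs_mul, abs_of_pos hh] at hcoord
    have h2 : |(i j : ℝ) - (i₀ j : ℝ)| ≤ R / h := (le_div_iff₀ hh).2 hcoord
    have h3 : ((|i j - i₀ j| : ℤ) : ℝ) ≤ (M : ℝ) := by
      push_cast
      exact h2.trans (Int.le_ceil _)
    have h4 : |i j - i₀ j| ≤ M := by exact_mod_cast h3
    have := abs_le.1 h4
    simp only [Set.mem_Icc]
    omega
  refine ⟨hfin, ?_, ?_⟩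
  · -- lower bound
    set F := hfin.toFinset with hF
    have hWU : {w : Fin d → ℝ | lpNormR p (w - x₀) < ε} ⊆ ⋃ i ∈ F, cubicCell h i := by
      intro w hw
      have hmem := mem_cell_floor hh w
      have hiS : (fun j => ⌊w j / h⌋) ∈ S :=
        ⟨x₀, hx₀, w, hmem, by rw [lp_sub_comm]; exact hw⟩
      exact Set.mem_biUnion (hfin.mem_toFinset.2 hiS) hmem
    -- closed boxes
    set Bx : (Fin d → ℤ) → Set (Fin d → ℝ) := fun i =>
      Set.pi Set.univ fun j => Set.Icc ((i j : ℝ) * h) (((i j : ℝ) + 1) * h) with hBx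
    have hcellBx : ∀ i, cubicCell h i ⊆ Bx i := fun i x hx j _ =>
      ⟨(hx j).1, (hx j).2.le⟩
    have hclosed : IsClosed (⋃ i ∈ F, Bx i) :=
      Set.Finite.isClosed_biUnion (F.finite_toSet) fun i _ =>
        isClosed_set_pi fun j _ => isClosed_Icc
    have hsub2 : (⋃ i ∈ F, cubicCell h i) ⊆ ⋃ i ∈ F, Bx i :=
      Set.iUnion₂_mono fun i _ => hcellBx i
    have hcl : {z : Fin d → ℝ | lpNormR p (z - x₀) ≤ ε} ⊆ ⋃ i ∈ F, Bx i := by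
      intro z hz
      have hzval : lpNormR p (z - x₀) ≤ ε := hz
      have hseq : ∀ n : ℕ, x₀ + (1 - 1 / ((n : ℝ) + 1)) • (z - x₀)
          ∈ ⋃ i ∈ F, cubicCell h i := by
        intro n
        apply hWU
        have ht0 : (0 : ℝ) ≤ 1 - 1 / ((n : ℝ) + 1) := by
          have : 1 / ((n : ℝ) + 1) ≤ 1 := by
            rw [div_le_one (by positivity)]; linarith [Nat.cast_nonneg (α := ℝ) n]
          linarith
        have ht1 : 1 - 1 / ((n : ℝ) + 1) < 1 := by
          have : 0 < 1 / ((n : ℝ) + 1) := by positivity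
          linarith
        show lpNormR p (x₀ + (1 - 1 / ((n : ℝ) + 1)) • (z - x₀) - x₀) < ε
        rw [add_sub_cancel_left, lp_smul hp0, abs_of_nonneg ht0]
        calc (1 - 1 / ((n : ℝ) + 1)) * lpNormR p (z - x₀)
            ≤ (1 - 1 / ((n : ℝ) + 1)) * ε := mul_le_mul_of_nonneg_left hzval ht0
          _ < ε := by nlinarith
      have htend : Filter.Tendsto (fun n : ℕ => x₀ + (1 - 1 / ((n : ℝ) + 1)) • (z - x₀))
          Filter.atTop (nhds z) := by
        have h1 : Filter.Tendsto (fun n : ℕ => 1 - 1 / ((n : ℝ) + 1))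
            Filter.atTop (nhds 1) := by
          have := tendsto_one_div_add_atTop_nhds_zero_nat (𝕜 := ℝ)
          have h2 := (tendsto_const_nhds (x := (1 : ℝ)) (f := Filter.atTop (α := ℕ))).sub this
          simpa using h2
        have h3 := (h1.smul_const (z - x₀)).const_add x₀
        simpa using h3
      have hzcl : z ∈ closure (⋃ i ∈ F, cubicCell h i) :=
        mem_closure_of_tendsto htend (Filter.Eventually.of_forall hseq)
      exact (closure_minimal hsub2 hclosed) hzcl
    -- volume computation
    have hBxvol : ∀ i : Fin d → ℤ, volume (Bx i) = ENNReal.ofReal h ^ d := by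
      intro i
      rw [hBx]
      rw [volume_pi_pi]
      have e : ∀ j : Fin d, volume (Set.Icc ((i j : ℝ) * h) (((i j : ℝ) + 1) * h))
          = ENNReal.ofReal h := fun j => by
        rw [Real.volume_Icc]; congr 1; ring
      rw [Finset.prod_congr rfl fun j _ => e j, Finset.prod_const, Finset.card_univ,
        Fintype.card_fin]
    have hvol : volume {x : Fin d → ℝ | lpNormR p x ≤ ε}
        ≤ (F.card : ℝ≥0∞) * ENNReal.ofReal h ^ d := by
      calc volume {x : Fin d → ℝ | lpNormR p x ≤ ε}
          = volume {z : Fin d → ℝ | lpNormR p (z - x₀) ≤ ε} := (htrans ε).symm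
        _ ≤ volume (⋃ i ∈ F, Bx i) := measure_mono hcl
        _ ≤ ∑ i ∈ F, volume (Bx i) := measure_biUnion_finset_le F Bx
        _ = (F.card : ℝ≥0∞) * ENNReal.ofReal h ^ d := by
            rw [Finset.sum_congr rfl fun i _ => hBxvol i, Finset.sum_const, nsmul_eq_mul]
    have hne : ((F.card : ℝ≥0∞) * ENNReal.ofReal h ^ d) ≠ ⊤ :=
      ENNReal.mul_ne_top (ENNReal.natCast_ne_top _)
        (ENNReal.pow_ne_top ENNReal.ofReal_ne_top)
    have hreal := ENNReal.toReal_mono hne hvol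
    rw [ENNReal.toReal_mul, ENNReal.toReal_pow, ENNReal.toReal_natCast,
      ENNReal.toReal_ofReal hh.le] at hreal
    rw [Set.ncard_eq_toFinset_card S hfin, ← hF]
    rw [div_le_iff₀ (pow_pos hh d)]
    exact hreal
  · -- upper bound
    set F := hfin.toFinset with hF
    have hdisj : (↑F : Set (Fin d → ℤ)).PairwiseDisjoint (cubicCell h) := by
      intro a _ b _ hab
      exact Set.disjoint_left.2 fun x hxa hxb => hab (cell_unique hh hxa hxb)
    have hUsub : (⋃ i ∈ F, cubicCell h i) ⊆ {z : Fin d → ℝ | lpNormR p (z - x₀) ≤ R} := by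
      intro z hz
      obtain ⟨i, hi, hzi⟩ := Set.mem_iUnion₂.1 hz
      exact hA i (hfin.mem_toFinset.1 hi) z hzi
    have hvol : (F.card : ℝ≥0∞) * ENNReal.ofReal h ^ d
        ≤ volume {x : Fin d → ℝ | lpNormR p x ≤ R} := by
      calc (F.card : ℝ≥0∞) * ENNReal.ofReal h ^ d
          = ∑ i ∈ F, volume (cubicCell h i) := by
            rw [Finset.sum_congr rfl fun i _ => cell_volume hh i, Finset.sum_const,
              nsmul_eq_mul]
        _ = volume (⋃ i ∈ F, cubicCell h i) :=
            (measure_biUnion_finset hdisj fun i _ => cell_measurable h i).symm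
        _ ≤ volume {z : Fin d → ℝ | lpNormR p (z - x₀) ≤ R} := measure_mono hUsub
        _ = volume {x : Fin d → ℝ | lpNormR p x ≤ R} := htrans R
    have hne : volume {x : Fin d → ℝ | lpNormR p x ≤ R} ≠ ⊤ := ball_vol_ne_top hp0 R
    have hreal := ENNReal.toReal_mono hne hvol
    rw [ENNReal.toReal_mul, ENNReal.toReal_pow, ENNReal.toReal_natCast,
      ENNReal.toReal_ofReal hh.le] at hreal
    rw [Set.ncard_eq_toFinset_card S hfin, ← hF]
    rw [le_div_iff₀ (pow_pos hh d)]
    exact hreal
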